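/- For any n ∈ ℕ, α, β > 0 and λ > 0, the n-th raw moment of the generalized fractional Poisson distribution equals (1/E_{α,β}(λ)) · ∑_{j=0}^n S(n,j) λ^j E^{(j)}_{α,β}(λ), where E^{(j)} is the j-th derivative and S(n,j) are Stirling numbers of the second kind. -/

import Mathlib

open Filter Real

/-- Stirling numbers of the second kind. -/
def stirling2 : ℕ → ℕ → ℕ
  | 0, 0 => 1
  | 0, _ + 1 => 0
  | _ + 1, 0 => 0
  | n + 1, j + 1 => (j + 1) * stirling2 n (j + 1) + stirling2 n j

/-- The generalized (two-parameter) Mittag-Leffler function. -/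
noncomputable def mittagLeffler (α β lam : ℝ) : ℝ :=
  ∑' k : ℕ, lam ^ k / Real.Gamma (β + α * k)



lemma gammaRatio_tendsto {a : ℝ} (ha : 0 < a) :
    Tendsto (fun x : ℝ => Real.Gamma x / Real.Gamma (x + a)) atTop (nhds 0) := by
  set c := min a (1/2) with hc
  have hc0 : 0 < c := lt_min ha (by norm_num)
  have hc1 : c < 1 := lt_of_le_of_lt (min_le_right _ _) (by norm_num)
  have hca : c ≤ a := min_le_left _ _
  have key : ∀ x : ℝ, 2 ≤ x →
      Real.Gamma x / Real.Gamma (x + a) ≤ (x + c) ^ (1 - c) / x := by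
    intro x hx
    have hx0 : (0:ℝ) < x := by linarith
    have hxc : (0:ℝ) < x + c := by linarith
    have hGxc : 0 < Real.Gamma (x + c) := Real.Gamma_pos_of_pos hxc
    have hGxa : 0 < Real.Gamma (x + a) := Real.Gamma_pos_of_pos (by linarith)
    have hmono : Real.Gamma (x + c) ≤ Real.Gamma (x + a) := by
      rcases eq_or_lt_of_le hca with h | h
      · rw [h]
      · exact le_of_lt (Real.Gamma_strictMonoOn_Ici (by simp only [Set.mem_Ici]; linarith)
          (by simp only [Set.mem_Ici]; linarith) (by linarith))
    have hlog : Real.Gamma (x + 1) ≤ Real.Gamma (x + c) ^ c * Real.Gamma (x + c + 1) ^ (1 - c) := by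
      have := Real.Gamma_mul_add_mul_le_rpow_Gamma_mul_rpow_Gamma
        (s := x + c) (t := x + c + 1) (a := c) (b := 1 - c) hxc (by linarith) hc0
        (by linarith) (by ring)
      have harg : c * (x + c) + (1 - c) * (x + c + 1) = x + 1 := by ring
      rwa [harg] at this
    have hG1 : Real.Gamma (x + c + 1) = (x + c) * Real.Gamma (x + c) :=
      Real.Gamma_add_one (ne_of_gt hxc)
    have hkey : x * Real.Gamma x ≤ Real.Gamma (x + c) * (x + c) ^ (1 - c) := by
      have h2 : Real.Gamma (x + c) ^ c * Real.Gamma (x + c + 1) ^ (1 - c)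
          = Real.Gamma (x + c) * (x + c) ^ (1 - c) := by
        rw [hG1, Real.mul_rpow hxc.le hGxc.le,
          show Real.Gamma (x+c) ^ c * ((x+c) ^ (1-c) * Real.Gamma (x+c) ^ (1-c))
            = (Real.Gamma (x+c) ^ c * Real.Gamma (x+c) ^ (1-c)) * (x+c)^(1-c) from by ring,
          ← Real.rpow_add hGxc]
        norm_num
      calc x * Real.Gamma x = Real.Gamma (x + 1) := (Real.Gamma_add_one (ne_of_gt hx0)).symm
        _ ≤ _ := hlog
        _ = _ := h2
    have h3 : Real.Gamma x / Real.Gamma (x + c) ≤ (x + c) ^ (1 - c) / x := by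
      rw [div_le_div_iff₀ hGxc hx0]
      nlinarith [hkey]
    calc Real.Gamma x / Real.Gamma (x + a) ≤ Real.Gamma x / Real.Gamma (x + c) := by
          gcongr
      _ ≤ _ := h3
  have hbound : Tendsto (fun x : ℝ => (x + c) ^ (1 - c) / x) atTop (nhds 0) := by
    have h2 : Tendsto (fun x : ℝ => (2:ℝ) ^ (1 - c) * x ^ (-c)) atTop (nhds 0) := by
      have := (tendsto_rpow_neg_atTop hc0).const_mul ((2:ℝ) ^ (1 - c))
      simpa using this
    apply squeeze_zero' (g := fun x : ℝ => (2:ℝ) ^ (1 - c) * x ^ (-c)) ?_ ?_ h2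
    · filter_upwards [eventually_ge_atTop (1:ℝ)] with x hx
      positivity
    · filter_upwards [eventually_ge_atTop (1:ℝ)] with x hx
      have hx0 : (0:ℝ) < x := by linarith
      have h4 : (x + c) ^ (1 - c) ≤ (2 * x) ^ (1 - c) := by
        apply Real.rpow_le_rpow (by linarith) (by linarith) (by linarith)
      calc (x + c) ^ (1-c) / x ≤ (2*x) ^ (1-c) / x := by gcongr
        _ = 2 ^ (1-c) * x ^ (-c) := by
            rw [Real.mul_rpow (by norm_num) hx0.le, mul_div_assoc,
              ← Real.rpow_sub_one (ne_of_gt hx0)]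
            norm_num
  apply squeeze_zero' ?_ ?_ hbound
  · filter_upwards [eventually_ge_atTop (2:ℝ)] with x hx
    have := Real.Gamma_pos_of_pos (show (0:ℝ) < x by linarith)
    have := Real.Gamma_pos_of_pos (show (0:ℝ) < x + a by linarith)
    positivity
  · filter_upwards [eventually_ge_atTop (2:ℝ)] with x hx using key x hx



lemma stirling2_eq_zero : ∀ {n j : ℕ}, n < j → stirling2 n j = 0
  | 0, _ + 1, _ => rfl
  | n + 1, j + 1, h => by
    rw [stirling2, stirling2_eq_zero (by omega), stirling2_eq_zero (by omega)]
    simp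

lemma mul_descFactorial (k j : ℕ) :
    k * k.descFactorial j = k.descFactorial (j + 1) + j * k.descFactorial j := by
  rcases le_or_gt j k with h | h
  · rw [Nat.descFactorial_succ, ← Nat.add_mul, Nat.sub_add_cancel h]
  · rw [Nat.descFactorial_of_lt h, Nat.descFactorial_of_lt (by omega)]
    simp

lemma stirling2_sum_descFactorial (n k : ℕ) :
    ∑ j ∈ Finset.range (n + 1), stirling2 n j * k.descFactorial j = k ^ n := by
  induction n with
  | zero => simp [stirling2]
  | succ n ih =>
    rw [Finset.sum_range_succ']
    have hstep : ∀ x : ℕ, stirling2 (n+1) (x+1) * k.descFactorial (x+1)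
        = (x+1) * stirling2 n (x+1) * k.descFactorial (x+1)
          + stirling2 n x * k.descFactorial (x+1) := fun x => by
      rw [stirling2]; ring
    simp only [hstep, Finset.sum_add_distrib, show stirling2 (n+1) 0 = 0 from rfl,
      Nat.zero_mul, add_zero]
    have hA : ∑ j ∈ Finset.range (n + 1), (j + 1) * stirling2 n (j + 1) * k.descFactorial (j + 1)
        = ∑ j ∈ Finset.range (n + 1), j * stirling2 n j * k.descFactorial j := by
      rw [Finset.sum_range_succ, stirling2_eq_zero (by omega)]
      rw [Finset.sum_range_succ' (fun j => j * stirling2 n j * k.descFactorial j)]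
      simp
    have hkey : k ^ (n + 1) = ∑ j ∈ Finset.range (n + 1),
        (stirling2 n j * k.descFactorial (j + 1) + j * stirling2 n j * k.descFactorial j) := by
      rw [pow_succ, ← ih, Finset.sum_mul]
      refine Finset.sum_congr rfl fun j _ => ?_
      rw [mul_assoc, mul_comm (k.descFactorial j) k, mul_descFactorial k j]
      ring
    rw [hkey, Finset.sum_add_distrib, hA]
    ring



lemma summable_core {α β : ℝ} (hα : 0 < α) (hβ : 0 < β) (j : ℕ) {r : ℝ} (hr : 0 < r) :
    Summable (fun k : ℕ => (Nat.descFactorial k j : ℝ) * r ^ k / Real.Gamma (β + α * k)) := by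
  set f : ℕ → ℝ := fun k => (Nat.descFactorial k j : ℝ) * r ^ k / Real.Gamma (β + α * k) with hf
  have hG : ∀ k : ℕ, 0 < Real.Gamma (β + α * k) := fun k =>
    Real.Gamma_pos_of_pos (by positivity)
  have hfpos : ∀ k : ℕ, j ≤ k → 0 < f k := by
    intro k hk
    have hd : 0 < Nat.descFactorial k j :=
      Nat.pos_of_ne_zero (fun h => by simp [Nat.descFactorial_eq_zero_iff_lt] at h; omega)
    have := hG k
    positivity
  -- ratio bound
  have hratio : Tendsto (fun k : ℕ => ‖f (k + 1)‖ / ‖f k‖) atTop (nhds 0) := by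
    have hxk : Tendsto (fun k : ℕ => β + α * k) atTop atTop := by
      apply tendsto_atTop_add_const_left
      exact (tendsto_natCast_atTop_atTop (R := ℝ)).const_mul_atTop hα
    have hg : Tendsto (fun k : ℕ => ((j:ℝ)+1)^j * r *
        (Real.Gamma (β + α * k) / Real.Gamma (β + α * k + α))) atTop (nhds 0) := by
      have := ((gammaRatio_tendsto hα).comp hxk).const_mul (((j:ℝ)+1)^j * r)
      simpa using this
    apply squeeze_zero' ?_ ?_ hg
    · filter_upwards with k; positivity
    · filter_upwards [eventually_ge_atTop j] with k hk
      have hfk := hfpos k hk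
      have hfk1 := hfpos (k+1) (by omega)
      have hdle : ((k+1).descFactorial j : ℝ) ≤ ((j:ℝ)+1)^j * (k.descFactorial j : ℝ) := by
        have h1 : (k+1).descFactorial j ≤ (k+1)^j := Nat.descFactorial_le_pow _ _
        have h2 : (k+1-j)^j ≤ k.descFactorial j := Nat.pow_sub_le_descFactorial k j
        have h3 : (k+1) ≤ (j+1)*(k+1-j) := by
          have h5 : (j+1)*(k+1-j) = (k+1-j) + j * (k+1-j) := by ring
          have h4 : j * 1 ≤ j * (k+1-j) := Nat.mul_le_mul_left j (by omega)
          omega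
        have : (k+1).descFactorial j ≤ (j+1)^j * k.descFactorial j := by
          calc (k+1).descFactorial j ≤ (k+1)^j := h1
            _ ≤ ((j+1)*(k+1-j))^j := Nat.pow_le_pow_left h3 j
            _ = (j+1)^j * (k+1-j)^j := mul_pow _ _ _
            _ ≤ (j+1)^j * k.descFactorial j := Nat.mul_le_mul_left _ h2
        calc ((k+1).descFactorial j : ℝ) ≤ (((j+1)^j * k.descFactorial j : ℕ) : ℝ) := by
              exact_mod_cast this
          _ = ((j:ℝ)+1)^j * (k.descFactorial j : ℝ) := by push_cast; ring
      rw [Real.norm_eq_abs, Real.norm_eq_abs, abs_of_pos hfk1, abs_of_pos hfk]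
      rw [div_le_iff₀ hfk]
      have hGk := hG k
      have hGk1 := hG (k+1)
      have hGeq : Real.Gamma (β + α * ((k:ℕ)+1:ℕ)) = Real.Gamma (β + α * k + α) := by
        push_cast; ring_nf
      have hG' : 0 < Real.Gamma (β + α * k + α) := by rw [← hGeq]; exact hG (k+1)
      have hrhs : ((j:ℝ)+1)^j * r * (Real.Gamma (β + α * k) / Real.Gamma (β + α * k + α)) * f k
          = (((j:ℝ)+1)^j * (k.descFactorial j : ℝ)) * r^(k+1) / Real.Gamma (β + α * k + α) := by
        rw [hf]
        field_simp
        ring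
      rw [hrhs, hf]
      simp only [hGeq]
      gcongr
  apply summable_of_ratio_test_tendsto_lt_one zero_lt_one ?_ hratio
  filter_upwards [eventually_ge_atTop j] with k hk using ne_of_gt (hfpos k hk)




noncomputable def mlCoeff (α β : ℝ) (j k : ℕ) : ℝ :=
  ((k + j).descFactorial j : ℝ) / Real.Gamma (β + α * (k + j))

lemma mlCoeff_nonneg {α β : ℝ} (hα : 0 < α) (hβ : 0 < β) (j k : ℕ) : 0 ≤ mlCoeff α β j k := by
  have : 0 < Real.Gamma (β + α * (k + j)) := Real.Gamma_pos_of_pos (by positivity)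
  unfold mlCoeff
  positivity

lemma mlCoeff_succ {α β : ℝ} (j k : ℕ) :
    ((k:ℝ) + 1) * mlCoeff α β j (k + 1) = mlCoeff α β (j + 1) k := by
  unfold mlCoeff
  have h1 : (k + 1 + j) = (k + (j + 1)) := by omega
  have h2 : (k + (j+1)).descFactorial (j+1) = (k + 1) * ((k + 1 + j).descFactorial j) := by
    rw [Nat.descFactorial_succ, ← h1, show k + 1 + j - j = k + 1 from by omega]
  rw [h1, h2]
  push_cast
  ring

lemma summable_shifted {α β : ℝ} (hα : 0 < α) (hβ : 0 < β) (j : ℕ) {r : ℝ} (hr : 0 < r) :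
    Summable (fun k : ℕ => mlCoeff α β j k * r ^ k) := by
  have h := ((summable_nat_add_iff (f := fun k : ℕ =>
      (Nat.descFactorial k j : ℝ) * r ^ k / Real.Gamma (β + α * k)) j).mpr
      (summable_core hα hβ j hr)).mul_left ((r ^ j)⁻¹)
  refine h.congr fun k => ?_
  unfold mlCoeff
  have : r ^ (k + j) = r ^ k * r ^ j := pow_add r k j
  field_simp
  push_cast; ring

lemma iteratedDeriv_ML {α β : ℝ} (hα : 0 < α) (hβ : 0 < β) (j : ℕ) (x : ℝ) :
    iteratedDeriv j (mittagLeffler α β) x = ∑' k : ℕ, mlCoeff α β j k * x ^ k := by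
  induction j generalizing x with
  | zero =>
    rw [iteratedDeriv_zero]
    unfold mittagLeffler mlCoeff
    refine tsum_congr fun k => ?_
    simp [Nat.descFactorial]
    ring
  | succ j ih =>
    rw [iteratedDeriv_succ]
    have hfun : iteratedDeriv j (mittagLeffler α β) = fun y => ∑' k : ℕ, mlCoeff α β j k * y ^ k :=
      funext ih
    rw [hfun]
    set R : ℝ := |x| + 1 with hR
    have hR0 : 0 < R := by positivity
    set t : Set ℝ := Set.Ioo (-R) R with ht
    set u : ℕ → ℝ := fun k => mlCoeff α β j k * (k * R ^ (k - 1)) with hu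
    have hu_sum : Summable u := by
      rw [← summable_nat_add_iff 1]
      have h := (summable_shifted hα hβ (j+1) hR0)
      refine h.congr fun k => ?_
      rw [hu]
      simp only [Nat.add_sub_cancel]
      rw [← mlCoeff_succ]
      push_cast
      ring
    have hg : ∀ (k : ℕ) (y : ℝ), y ∈ t → HasDerivAt (fun z => mlCoeff α β j k * z ^ k)
        (mlCoeff α β j k * (k * y ^ (k - 1))) y :=
      fun k y _ => (hasDerivAt_pow k y).const_mul _
    have hg' : ∀ (k : ℕ) (y : ℝ), y ∈ t → ‖mlCoeff α β j k * (k * y ^ (k - 1))‖ ≤ u k := by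
      intro k y hy
      have hy' : |y| ≤ R := by
        rw [abs_le]
        exact ⟨le_of_lt hy.1, le_of_lt hy.2⟩
      rw [norm_mul, norm_mul, norm_pow, Real.norm_natCast,
        Real.norm_eq_abs (mlCoeff α β j k), abs_of_nonneg (mlCoeff_nonneg hα hβ j k),
        Real.norm_eq_abs y]
      simp only [hu]
      gcongr
      exact mlCoeff_nonneg hα hβ j k
    have h0t : (0:ℝ) ∈ t := by constructor <;> simp [hR0] <;> linarith
    have hxt : x ∈ t := by
      constructor
      · have := neg_abs_le x; simp only [hR]; linarith
      · have := le_abs_self x; simp only [hR]; linarith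
    have hg0 : Summable fun k : ℕ => mlCoeff α β j k * (0:ℝ) ^ k := by
      apply summable_of_ne_finset_zero (s := {0})
      intro k hk
      simp only [Finset.mem_singleton] at hk
      rw [zero_pow hk, mul_zero]
    have hd := hasDerivAt_tsum_of_isPreconnected hu_sum isOpen_Ioo
      (isPreconnected_Ioo) hg hg' h0t hg0 hxt
    rw [hd.deriv]
    have hsum : Summable fun k : ℕ => mlCoeff α β j k * ((k:ℝ) * x ^ (k - 1)) :=
      Summable.of_norm_bounded hu_sum fun k => hg' k x hxt
    rw [Summable.tsum_eq_zero_add hsum]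
    simp only [Nat.cast_zero, zero_mul, mul_zero, zero_add]
    refine tsum_congr fun k => ?_
    rw [Nat.add_sub_cancel, ← mul_assoc, mul_comm (mlCoeff α β j (k+1)) _, ]
    push_cast
    rw [mlCoeff_succ]


theorem genFracPoisson_raw_moment (n : ℕ) (α β lam : ℝ) (hα : 0 < α) (hβ : 0 < β)
    (hlam : 0 < lam) :
    ∑' k : ℕ, (k : ℝ) ^ n * lam ^ k / (Real.Gamma (β + α * k) * mittagLeffler α β lam)
      = (1 / mittagLeffler α β lam)
        * ∑ j ∈ Finset.range (n + 1),
            (stirling2 n j : ℝ) * lam ^ j * iteratedDeriv j (mittagLeffler α β) lam := by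
  have hG : ∀ k : ℕ, 0 < Real.Gamma (β + α * k) := fun k =>
    Real.Gamma_pos_of_pos (by positivity)
  have hsum0 : Summable (fun k : ℕ => lam ^ k / Real.Gamma (β + α * k)) := by
    refine (summable_shifted hα hβ 0 hlam).congr fun k => ?_
    simp [mlCoeff, Nat.descFactorial]
    ring
  have hEpos : 0 < mittagLeffler α β lam := by
    rw [mittagLeffler]
    refine Summable.tsum_pos hsum0 (fun k => by have := hG k; positivity) 0 ?_
    have h0 := hG 0
    exact div_pos (by positivity) h0
  -- the weighted coefficient functions
  set F : ℕ → ℕ → ℝ := fun j k =>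
    (stirling2 n j : ℝ) * (Nat.descFactorial k j : ℝ) * lam ^ k / Real.Gamma (β + α * k)
    with hF
  have hFsum : ∀ j, Summable (F j) := by
    intro j
    refine ((summable_core hα hβ j hlam).mul_left (stirling2 n j : ℝ)).congr fun k => ?_
    rw [hF]; ring
  -- each term of the RHS sum equals a tsum
  have hterm : ∀ j, (stirling2 n j : ℝ) * lam ^ j * iteratedDeriv j (mittagLeffler α β) lam
      = ∑' k : ℕ, F j k := by
    intro j
    rw [iteratedDeriv_ML hα hβ j lam, ← tsum_mul_left]
    rw [← Summable.sum_add_tsum_nat_add (f := F j) j (hFsum j)]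
    have hzero : ∑ i ∈ Finset.range j, F j i = 0 := by
      refine Finset.sum_eq_zero fun i hi => ?_
      rw [hF]
      simp only
      rw [Nat.descFactorial_of_lt (Finset.mem_range.mp hi)]
      simp
    rw [hzero, zero_add]
    refine tsum_congr fun k => ?_
    rw [hF, mlCoeff]
    simp only
    rw [pow_add]
    field_simp
    push_cast; ring
  rw [Finset.sum_congr rfl (fun j _ => hterm j), ← Summable.tsum_finsetSum (fun j _ => hFsum j)]
  have hLHS : ∀ k : ℕ, (k : ℝ) ^ n * lam ^ k / (Real.Gamma (β + α * k) * mittagLeffler α β lam)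
      = (1 / mittagLeffler α β lam) * ((k : ℝ) ^ n * lam ^ k / Real.Gamma (β + α * k)) := by
    intro k
    field_simp
  rw [tsum_congr hLHS, tsum_mul_left]
  congr 1
  refine tsum_congr fun k => ?_
  simp only [hF]
  rw [show ((k:ℝ))^n = ((k^n : ℕ):ℝ) from by push_cast; ring,
    ← stirling2_sum_descFactorial n k, Nat.cast_sum, Finset.sum_mul, Finset.sum_div]
  refine Finset.sum_congr rfl fun j _ => by push_cast; ring
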